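/- In the setting of the arrow matrix A above, if λ = α + iβ is an eigenvalue with α ≥ 0, then (since λ + bᵢ ≠ 0 for all i) α = -D - Σᵢ aᵢ + Σᵢ aᵢ cᵢ(bᵢ+α)/((bᵢ+α)² + β²), and each term satisfies aᵢ cᵢ(bᵢ+α)/((bᵢ+α)²+β²) ≤ aᵢ, yielding α ≤ -D < 0, a contradiction. -/

import Mathlib

open Matrix

theorem stmt12 (n : ℕ) (D : ℝ) (a b c : Fin n → ℝ)
    (hD : 0 < D) (ha : ∀ i, 0 ≤ a i) (hb : ∀ i, 0 < b i) (hc : ∀ i, c i ≤ b i)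
    (A : Matrix (Unit ⊕ Fin n) (Unit ⊕ Fin n) ℝ)
    (hA : ∀ i j, A i j =
      match i, j with
      | Sum.inl _, Sum.inl _ => -D - ∑ k, a k
      | Sum.inl _, Sum.inr j => c j
      | Sum.inr i, Sum.inl _ => a i
      | Sum.inr i, Sum.inr j => if i = j then -b i else 0)
    (z : ℂ) (hz : z ∈ spectrum ℂ (A.map (algebraMap ℝ ℂ)))
    (hα : 0 ≤ z.re) :
    (∀ i, (z + (b i : ℂ)) ≠ 0) ∧
    z.re = -D - ∑ i, a i +
      ∑ i, a i * (c i * (b i + z.re) / ((b i + z.re) ^ 2 + z.im ^ 2)) ∧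
    (∀ i, a i * (c i * (b i + z.re) / ((b i + z.re) ^ 2 + z.im ^ 2)) ≤ a i) ∧
    z.re ≤ -D ∧
    False := by
  have hne : ∀ i, (z + (b i : ℂ)) ≠ 0 := by
    intro i h
    have h1 : (z + (b i : ℂ)).re = 0 := by rw [h]; simp
    simp [Complex.add_re] at h1
    nlinarith [hb i]
  have hden : ∀ i, 0 < (b i + z.re) ^ 2 + z.im ^ 2 := by
    intro i
    have : 0 < b i + z.re := by nlinarith [hb i]
    positivity
  -- eigenvector
  set M := A.map (algebraMap ℝ ℂ) with hM
  have hz2 : z ∈ spectrum ℂ (Matrix.toLin' M) := by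
    rw [show Matrix.toLin' M = Matrix.toLinAlgEquiv' M from rfl, AlgEquiv.spectrum_eq]
    exact hz
  have hev : Module.End.HasEigenvalue (Matrix.toLin' M) z :=
    (Module.End.hasEigenvalue_iff_mem_spectrum).2 hz2
  obtain ⟨v, hv⟩ := hev.exists_hasEigenvector
  have hmul : M.mulVec v = z • v := by rw [← Matrix.toLin'_apply]; exact hv.apply_eq_smul
  set v0 := v (Sum.inl ()) with hv0def
  have rowi : ∀ i, (a i : ℂ) * v0 = (z + b i) * v (Sum.inr i) := by
    intro i
    have h := congrFun hmul (Sum.inr i)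
    simp only [hM, Matrix.mulVec, dotProduct, Fintype.sum_sum_type, Matrix.map_apply, hA,
      Fintype.sum_unique, Pi.smul_apply, smul_eq_mul, Complex.coe_algebraMap,
      apply_ite Complex.ofReal, Complex.ofReal_zero, ite_mul, zero_mul,
      Finset.sum_ite_eq, Finset.mem_univ, if_true] at h
    push_cast at h ⊢
    linear_combination h
  have hv0 : v0 ≠ 0 := by
    intro h0
    apply hv.2
    funext j
    cases j with
    | inl u => cases u; exact h0
    | inr i =>
      have := rowi i
      rw [h0, mul_zero] at this
      exact (mul_eq_zero.1 this.symm).resolve_left (hne i)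
  have hwi : ∀ i, v (Sum.inr i) = (a i : ℂ) * v0 / (z + b i) := by
    intro i
    field_simp [hne i]
    linear_combination -(rowi i)
  have row0 : ((-D - ∑ k, a k : ℝ) : ℂ) * v0 + ∑ i, (c i : ℂ) * v (Sum.inr i) = z * v0 := by
    have h := congrFun hmul (Sum.inl ())
    simp only [hM, Matrix.mulVec, dotProduct, Fintype.sum_sum_type, Matrix.map_apply, hA,
      Fintype.sum_unique, Pi.smul_apply, smul_eq_mul, Complex.coe_algebraMap] at h
    push_cast at h ⊢
    linear_combination h
  have key : z = ((-D - ∑ k, a k : ℝ) : ℂ) + ∑ i, (a i * c i : ℂ) / (z + b i) := by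
    have h2 : (((-D - ∑ k, a k : ℝ) : ℂ) + ∑ i, (a i * c i : ℂ) / (z + b i)) * v0 = z * v0 := by
      rw [← row0]
      rw [add_mul, Finset.sum_mul]
      congr 1
      apply Finset.sum_congr rfl
      intro i _
      rw [hwi i]
      field_simp
    exact (mul_right_cancel₀ hv0 h2).symm
  have hterm : ∀ i, ((a i * c i : ℂ) / (z + b i)).re =
      a i * (c i * (b i + z.re) / ((b i + z.re) ^ 2 + z.im ^ 2)) := by
    intro i
    rw [Complex.div_re]
    have hre : ((a i * c i : ℂ)).re = a i * c i := by simp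
    have him : ((a i * c i : ℂ)).im = 0 := by simp
    have h2 : (z + (b i : ℂ)).re = z.re + b i := by simp
    have h3 : (z + (b i : ℂ)).im = z.im := by simp
    have h4 : Complex.normSq (z + b i) = (b i + z.re) ^ 2 + z.im ^ 2 := by
      rw [Complex.normSq_apply, h2, h3]; ring
    rw [hre, him, h2, h3, h4]
    field_simp
    ring
  have keyre : z.re = -D - ∑ i, a i +
      ∑ i, a i * (c i * (b i + z.re) / ((b i + z.re) ^ 2 + z.im ^ 2)) := by
    have := congrArg Complex.re key
    rw [Complex.add_re, Complex.re_sum] at this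
    simp only [hterm, Complex.ofReal_re] at this
    linarith [this]
  have hbd : ∀ i, a i * (c i * (b i + z.re) / ((b i + z.re) ^ 2 + z.im ^ 2)) ≤ a i := by
    intro i
    have hX : c i * (b i + z.re) / ((b i + z.re) ^ 2 + z.im ^ 2) ≤ 1 := by
      rw [div_le_one (hden i)]
      nlinarith [hb i, hc i, sq_nonneg z.im]
    exact mul_le_of_le_one_right (ha i) hX
  have hle : z.re ≤ -D := by
    have hsum : ∑ i, a i * (c i * (b i + z.re) / ((b i + z.re) ^ 2 + z.im ^ 2)) ≤ ∑ i, a i :=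
      Finset.sum_le_sum fun i _ => hbd i
    linarith [keyre]
  exact ⟨hne, keyre, hbd, hle, by linarith⟩
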